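/- arXiv:1712.03358 — 6 statements merged into one kernel-verified Lean document; each statement's English description precedes it below -/
import Mathlib

section
/- For k > 0 and 0 < d < 1, the identity (1+d)²(3−d)²(1+k)² − 16 = (7+2d−d²+k(1+d)(3−d))·(k(1+d)(3−d)−(1−d)²) holds; if additionally k > (1−d)²/((1+d)(3−d)), then this quantity is positive, so 2⁻⁴(1+d)²(3−d)²σ²τ − (1+k)⁻²σ²τ is positive definite for positive definite τ and σ ≠ 0. -/
open Matrix

lemma posDef_smul_aux {l : ℕ} {τ : Matrix (Fin l) (Fin l) ℝ} (hτ : τ.PosDef)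
    {c : ℝ} (hc : 0 < c) : (c • τ).PosDef := by
  refine ⟨by rw [IsHermitian, conjTranspose_smul]; simpa using congrArg (c • ·) hτ.1.eq, fun x hx => ?_⟩
  have h := hτ.2 hx
  simp only [star_trivial] at h ⊢
  convert mul_pos hc h using 1
  simp only [Matrix.smul_apply, smul_eq_mul, Finsupp.mul_sum]
  exact Finsupp.sum_congr fun i _ => Finsupp.sum_congr fun j _ => by ring

theorem stmt_6 {l : ℕ} (τ : Matrix (Fin l) (Fin l) ℝ) (hτ : τ.PosDef)
    (σ k d : ℝ) (hσ : σ ≠ 0) (hk : 0 < k) (hd : 0 < d) (hd1 : d < 1) :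
    (1 + d) ^ 2 * (3 - d) ^ 2 * (1 + k) ^ 2 - 16 =
      (7 + 2 * d - d ^ 2 + k * (1 + d) * (3 - d)) *
        (k * (1 + d) * (3 - d) - (1 - d) ^ 2) ∧
    (k > (1 - d) ^ 2 / ((1 + d) * (3 - d)) →
      0 < (7 + 2 * d - d ^ 2 + k * (1 + d) * (3 - d)) *
            (k * (1 + d) * (3 - d) - (1 - d) ^ 2) ∧
      (((2 : ℝ)⁻¹ ^ 4 * (1 + d) ^ 2 * (3 - d) ^ 2 * σ ^ 2) • τ -
        (((1 + k) ^ 2)⁻¹ * σ ^ 2) • τ).PosDef) := by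
  have hden : 0 < (1 + d) * (3 - d) := by nlinarith
  refine ⟨by ring, fun hkgt => ?_⟩
  have hk2 : (1 - d) ^ 2 < k * ((1 + d) * (3 - d)) := by
    rw [gt_iff_lt, div_lt_iff₀ hden] at hkgt; linarith
  have h1 : 0 < 7 + 2 * d - d ^ 2 + k * (1 + d) * (3 - d) := by nlinarith
  have h2 : 0 < k * (1 + d) * (3 - d) - (1 - d) ^ 2 := by nlinarith
  have hprod := mul_pos h1 h2
  refine ⟨hprod, ?_⟩
  rw [← sub_smul]
  apply posDef_smul_aux hτ
  have hσ2 : 0 < σ ^ 2 := pow_pos (abs_pos.mpr hσ) 2 |>.trans_eq (by rw [sq_abs])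
  have hk1 : (0:ℝ) < (1 + k) ^ 2 := by positivity
  have key : 16 < (1 + d) ^ 2 * (3 - d) ^ 2 * (1 + k) ^ 2 := by nlinarith
  have : ((1 + k) ^ 2)⁻¹ < (2 : ℝ)⁻¹ ^ 4 * (1 + d) ^ 2 * (3 - d) ^ 2 := by
    rw [inv_lt_iff_one_lt_mul₀ hk1]
    rw [show ((2:ℝ)⁻¹ ^ 4) = (16 : ℝ)⁻¹ by norm_num]
    rw [show (16:ℝ)⁻¹ * (1 + d) ^ 2 * (3 - d) ^ 2 * (1 + k) ^ 2
        = (1 + d) ^ 2 * (3 - d) ^ 2 * (1 + k) ^ 2 / 16 by ring]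
    rw [lt_div_iff₀ (by norm_num)]
    linarith
  nlinarith
end

section
/- For k > 0 and 0 < d < 1, the identity (1+d)²(1+k)⁴ − 4(1+2k)² = (3+6k+k²+d(1+k)²)·(k²−2k−1+d(1+k)²) holds; if additionally d > (1+2k−k²)/(1+k)², then this quantity is positive, so 2⁻²(1+d)²σ²τ − (1+k)⁻⁴(1+2k)²σ²τ is positive definite for positive definite τ and σ ≠ 0. -/
open Matrix

theorem stmt_7 {l : ℕ} (τ : Matrix (Fin l) (Fin l) ℝ) (hτ : τ.PosDef)
    (σ k d : ℝ) (hσ : σ ≠ 0) (hk : 0 < k) (hd : 0 < d) (hd1 : d < 1) :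
    (1 + d) ^ 2 * (1 + k) ^ 4 - 4 * (1 + 2 * k) ^ 2 =
      (3 + 6 * k + k ^ 2 + d * (1 + k) ^ 2) *
        (k ^ 2 - 2 * k - 1 + d * (1 + k) ^ 2) ∧
    (d > (1 + 2 * k - k ^ 2) / (1 + k) ^ 2 →
      0 < (3 + 6 * k + k ^ 2 + d * (1 + k) ^ 2) *
            (k ^ 2 - 2 * k - 1 + d * (1 + k) ^ 2) ∧
      (((2 : ℝ)⁻¹ ^ 2 * (1 + d) ^ 2 * σ ^ 2) • τ -
        (((1 + k) ^ 4)⁻¹ * (1 + 2 * k) ^ 2 * σ ^ 2) • τ).PosDef) := by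
  have hk2 : (0:ℝ) < (1 + k) ^ 2 := by positivity
  have hk4 : (0:ℝ) < (1 + k) ^ 4 := by positivity
  refine ⟨by ring, fun hdgt => ?_⟩
  have hdk : 1 + 2 * k - k ^ 2 < d * (1 + k) ^ 2 := by
    rw [gt_iff_lt, div_lt_iff₀ hk2] at hdgt
    linarith
  have hprod : 0 < (3 + 6 * k + k ^ 2 + d * (1 + k) ^ 2) *
      (k ^ 2 - 2 * k - 1 + d * (1 + k) ^ 2) := by
    have h1 : 0 < 3 + 6 * k + k ^ 2 + d * (1 + k) ^ 2 := by positivity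
    have h2 : 0 < k ^ 2 - 2 * k - 1 + d * (1 + k) ^ 2 := by linarith
    exact mul_pos h1 h2
  refine ⟨hprod, ?_⟩
  rw [← sub_smul]
  have hc : 0 < (2 : ℝ)⁻¹ ^ 2 * (1 + d) ^ 2 * σ ^ 2 -
      ((1 + k) ^ 4)⁻¹ * (1 + 2 * k) ^ 2 * σ ^ 2 := by
    have hσ2 : 0 < σ ^ 2 := by positivity
    have key : 0 < (1 + d) ^ 2 * (1 + k) ^ 4 - 4 * (1 + 2 * k) ^ 2 := by
      nlinarith [hprod]
    rw [sub_pos]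
    apply mul_lt_mul_of_pos_right _ hσ2
    rw [inv_mul_lt_iff₀ hk4]
    nlinarith
  refine Matrix.PosDef.of_dotProduct_mulVec_pos ?_ ?_
  · have h1 := hτ.1
    simp only [Matrix.IsHermitian, conjTranspose_smul, h1.eq]
    simp
  · intro x hx
    have hpos := hτ.dotProduct_mulVec_pos hx
    simp only [smul_mulVec, dotProduct_smul, smul_eq_mul]
    exact mul_pos hc hpos
end

section
/- Let B be a symmetric positive semidefinite real n×n matrix, b an n-vector, and λ > 0 a real number. Then λB − bb' is positive semidefinite if and only if b lies in the column space of B and b'B⁻b ≤ λ, where B⁻ is any generalized inverse of B (the value of b'B⁻b is independent of the choice of B⁻ when b ∈ range(B)). -/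
open Matrix

lemma dotSymm' {n : ℕ} (B : Matrix (Fin n) (Fin n) ℝ) (hB : Bᵀ = B) (x y : Fin n → ℝ) :
    x ⬝ᵥ B.mulVec y = y ⬝ᵥ B.mulVec x := by
  rw [dotProduct_mulVec, ← mulVec_transpose, hB, dotProduct_comm]

lemma auxMemRange {n : ℕ} (B : Matrix (Fin n) (Fin n) ℝ) (hB : Bᵀ = B)
    (b : Fin n → ℝ) (h : ∀ y, B.mulVec y = 0 → b ⬝ᵥ y = 0) :
    ∃ x, B.mulVec x = b := by
  set T := Matrix.toEuclideanLin B with hT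
  have hker : ∀ w : EuclideanSpace ℝ (Fin n), w ∈ LinearMap.ker T ↔
      B.mulVec (WithLp.equiv 2 (Fin n → ℝ) w) = 0 := by
    intro w
    constructor
    · intro hw
      have : T w = 0 := hw
      exact congrArg (WithLp.equiv 2 (Fin n → ℝ)) this
    · intro hw
      show T w = 0
      exact congrArg (WithLp.equiv 2 (Fin n → ℝ)).symm hw
  have hle : LinearMap.range T ≤ (LinearMap.ker T)ᗮ := by
    rintro _ ⟨u, rfl⟩
    rw [Submodule.mem_orthogonal]
    intro w hw
    have hw0 : B.mulVec (WithLp.equiv 2 (Fin n → ℝ) w) = 0 := (hker w).1 hw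
    have : (inner ℝ w (T u) : ℝ) =
        (WithLp.equiv 2 (Fin n → ℝ) w) ⬝ᵥ B.mulVec (WithLp.equiv 2 (Fin n → ℝ) u) := by
      simp [PiLp.inner_apply, RCLike.inner_apply, dotProduct, Matrix.toEuclideanLin_apply,
        mul_comm]
      simp [hT, Matrix.toEuclideanLin_apply, mul_comm]
    rw [this, dotSymm' B hB, hw0, dotProduct_zero]
  have heq : (LinearMap.ker T)ᗮ = LinearMap.range T := by
    refine (Submodule.eq_of_le_of_finrank_le hle ?_).symm
    have h1 := Submodule.finrank_add_finrank_orthogonal (K := LinearMap.ker T)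
    have h2 := LinearMap.finrank_range_add_finrank_ker T
    omega
  have hbmem : (WithLp.equiv 2 (Fin n → ℝ)).symm b ∈ (LinearMap.ker T)ᗮ := by
    rw [Submodule.mem_orthogonal]
    intro w hw
    have hw0 := (hker w).1 hw
    have hb := h _ hw0
    have : (inner ℝ w ((WithLp.equiv 2 (Fin n → ℝ)).symm b) : ℝ) =
        b ⬝ᵥ (WithLp.equiv 2 (Fin n → ℝ) w) := by
      simp [PiLp.inner_apply, RCLike.inner_apply, dotProduct, mul_comm]
    rw [this, hb]
  rw [heq] at hbmem
  obtain ⟨x, hx⟩ := hbmem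
  exact ⟨WithLp.equiv 2 (Fin n → ℝ) x, congrArg (WithLp.equiv 2 (Fin n → ℝ)) hx⟩

lemma csPSD {n : ℕ} (B : Matrix (Fin n) (Fin n) ℝ) (hB : B.PosSemidef) (x y : Fin n → ℝ) :
    (x ⬝ᵥ B.mulVec y)^2 ≤ (x ⬝ᵥ B.mulVec x) * (y ⬝ᵥ B.mulVec y) := by
  have hBt : Bᵀ = B := by
    have := hB.1
    rwa [Matrix.IsHermitian, conjTranspose_eq_transpose_of_trivial] at this
  have key : ∀ t : ℝ, 0 ≤ (y ⬝ᵥ B.mulVec y) * (t * t) + (2 * (x ⬝ᵥ B.mulVec y)) * t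
      + (x ⬝ᵥ B.mulVec x) := by
    intro t
    have h0 := hB.dotProduct_mulVec_nonneg (x + t • y)
    simp only [star_trivial] at h0
    have hexp : (x + t • y) ⬝ᵥ B.mulVec (x + t • y) =
        (y ⬝ᵥ B.mulVec y) * (t * t) + (2 * (x ⬝ᵥ B.mulVec y)) * t + (x ⬝ᵥ B.mulVec x) := by
      simp only [mulVec_add, mulVec_smul, add_dotProduct, dotProduct_add, smul_dotProduct,
        dotProduct_smul, smul_eq_mul]
      rw [dotSymm' B hBt y x]
      ring
    linarith [hexp ▸ h0]
  have hd := discrim_le_zero key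
  rw [discrim] at hd
  nlinarith [hd]

lemma vecMulVecQuad {n : ℕ} (b y : Fin n → ℝ) :
    y ⬝ᵥ (vecMulVec b b).mulVec y = (b ⬝ᵥ y) * (b ⬝ᵥ y) := by
  simp only [mulVec, dotProduct, vecMulVec_apply, Finset.mul_sum, Finset.sum_mul]
  rw [Finset.sum_comm]
  congr 1; ext j; congr 1; ext i; ring

theorem stmt_11 {n : ℕ} (B Bg : Matrix (Fin n) (Fin n) ℝ)
    (hB : B.PosSemidef) (b : Fin n → ℝ) (lam : ℝ) (hlam : 0 < lam)
    (hBg : B * Bg * B = B) :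
    ((lam • B - vecMulVec b b).PosSemidef ↔
      (∃ x, B.mulVec x = b) ∧ b ⬝ᵥ Bg.mulVec b ≤ lam) ∧
    (∀ Bg' : Matrix (Fin n) (Fin n) ℝ, B * Bg' * B = B →
      (∃ x, B.mulVec x = b) → b ⬝ᵥ Bg'.mulVec b = b ⬝ᵥ Bg.mulVec b) := by
  have hBt : Bᵀ = B := by
    have := hB.1
    rwa [Matrix.IsHermitian, conjTranspose_eq_transpose_of_trivial] at this
  have key : ∀ G : Matrix (Fin n) (Fin n) ℝ, B * G * B = B → ∀ x, B.mulVec x = b →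
      b ⬝ᵥ G.mulVec b = x ⬝ᵥ B.mulVec x := by
    intro G hG x hx
    rw [← hx, mulVec_mulVec, dotProduct_mulVec, vecMul_mulVec, hBt, ← Matrix.mul_assoc, hG,
      ← mulVec_transpose, hBt, dotProduct_comm]
  have quad : ∀ y : Fin n → ℝ, y ⬝ᵥ (lam • B - vecMulVec b b).mulVec y =
      lam * (y ⬝ᵥ B.mulVec y) - (b ⬝ᵥ y) * (b ⬝ᵥ y) := by
    intro y
    rw [sub_mulVec, dotProduct_sub, smul_mulVec, dotProduct_smul, smul_eq_mul,
      vecMulVecQuad]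
  refine ⟨⟨?_, ?_⟩, ?_⟩
  · intro hPSD
    have hk : ∀ y, B.mulVec y = 0 → b ⬝ᵥ y = 0 := by
      intro y hy
      have h0 := hPSD.dotProduct_mulVec_nonneg y
      simp only [star_trivial] at h0
      rw [quad y, hy, dotProduct_zero] at h0
      nlinarith [h0]
    obtain ⟨x, hx⟩ := auxMemRange B hBt b hk
    refine ⟨⟨x, hx⟩, ?_⟩
    rw [key Bg hBg x hx]
    have h0 := hPSD.dotProduct_mulVec_nonneg x
    simp only [star_trivial] at h0
    rw [quad x] at h0
    have hbx : b ⬝ᵥ x = x ⬝ᵥ B.mulVec x := by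
      rw [← hx, dotProduct_comm]
    rw [hbx] at h0
    have hpos := hB.dotProduct_mulVec_nonneg x
    simp only [star_trivial] at hpos
    nlinarith [h0, hpos, hlam]
  · rintro ⟨⟨x, hx⟩, hle⟩
    rw [key Bg hBg x hx] at hle
    refine Matrix.PosSemidef.of_dotProduct_mulVec_nonneg ?_ ?_
    · have h1 : (lam • B - vecMulVec b b)ᴴ = lam • B - vecMulVec b b := by
        rw [conjTranspose_sub, conjTranspose_smul]
        congr 1
        · rw [hB.1]; simp
        · ext i j
          simp [conjTranspose_apply, vecMulVec_apply, mul_comm]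
      exact h1
    · intro y
      simp only [star_trivial]
      rw [quad y]
      have hby : b ⬝ᵥ y = x ⬝ᵥ B.mulVec y := by
        rw [← hx, dotSymm' B hBt x y, dotProduct_comm]
      rw [hby]
      have hcs := csPSD B hB x y
      have hpos := hB.dotProduct_mulVec_nonneg y
      simp only [star_trivial] at hpos
      nlinarith [hcs, hpos, hle, hlam]
  · rintro Bg' hBg' ⟨x, hx⟩
    rw [key Bg' hBg' x hx, key Bg hBg x hx]
end

section
/- Let D be a symmetric positive definite real n×n matrix and b₁, b₂ ∈ ℝⁿ. Then the matrix D + b₁b₁' − b₂b₂' is positive semidefinite if and only if b₂'(D + b₁b₁')⁻¹b₂ ≤ 1. -/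
open Matrix

private lemma symm_dot_assoc {n : ℕ} {M : Matrix (Fin n) (Fin n) ℝ}
    (hM : M.IsHermitian) (v x : Fin n → ℝ) :
    v ⬝ᵥ M *ᵥ x = (M *ᵥ v) ⬝ᵥ x := by
  have hMt : Mᵀ = M := by
    ext i j
    have := congrFun (congrFun hM.eq i) j
    simpa [conjTranspose_apply] using this
  rw [dotProduct_mulVec, ← mulVec_transpose, hMt]

private lemma vecMulVec_mulVec' {n : ℕ} (v w x : Fin n → ℝ) :
    vecMulVec v w *ᵥ x = (w ⬝ᵥ x) • v := by
  ext i
  simp [vecMulVec_apply, mulVec, dotProduct, Finset.mul_sum, Finset.sum_mul,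
    mul_comm, mul_assoc, mul_left_comm]

private lemma posSemidef_vecMulVec_self {n : ℕ} (b : Fin n → ℝ) :
    (vecMulVec b b).PosSemidef := by
  refine posSemidef_iff_dotProduct_mulVec.mpr ⟨?_, ?_⟩
  · ext i j
    simp [conjTranspose_apply, vecMulVec_apply, mul_comm]
  · intro x
    rw [vecMulVec_mulVec']
    simp only [star_trivial, dotProduct_smul, smul_eq_mul]
    have : x ⬝ᵥ b = b ⬝ᵥ x := dotProduct_comm _ _
    rw [this]
    exact mul_self_nonneg _

private lemma dot_sq_cauchy {n : ℕ} (v u : Fin n → ℝ) :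
    (v ⬝ᵥ u) ^ 2 ≤ (v ⬝ᵥ v) * (u ⬝ᵥ u) := by
  have h := Finset.sum_mul_sq_le_sq_mul_sq Finset.univ v u
  simpa [dotProduct, sq] using h

theorem stmt_12 {n : ℕ} (D : Matrix (Fin n) (Fin n) ℝ) (hD : D.PosDef)
    (b₁ b₂ : Fin n → ℝ) :
    (D + vecMulVec b₁ b₁ - vecMulVec b₂ b₂).PosSemidef ↔
      b₂ ⬝ᵥ (D + vecMulVec b₁ b₁)⁻¹.mulVec b₂ ≤ 1 := by
  set A := D + vecMulVec b₁ b₁ with hAdef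
  have hA : A.PosDef := hD.add_posSemidef (posSemidef_vecMulVec_self b₁)
  have hAu : IsUnit A.det := isUnit_iff_isUnit_det _ |>.1 hA.isUnit
  have hAA : A * A⁻¹ = 1 := mul_nonsing_inv A hAu
  set t := b₂ ⬝ᵥ A⁻¹ *ᵥ b₂ with htdef
  have ht0 : 0 ≤ t := by simpa using hA.inv.posSemidef.dotProduct_mulVec_nonneg b₂
  constructor
  · intro h
    set x := A⁻¹ *ᵥ b₂ with hxdef
    have h1 := h.dotProduct_mulVec_nonneg x
    have hAx : A *ᵥ x = b₂ := by
      rw [hxdef, mulVec_mulVec, hAA, one_mulVec]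
    have hxb : x ⬝ᵥ b₂ = t := by
      rw [htdef, hxdef]; exact dotProduct_comm _ _
    rw [sub_mulVec, dotProduct_sub, hAx, vecMulVec_mulVec'] at h1
    simp only [star_trivial, dotProduct_smul, smul_eq_mul] at h1
    rw [hxb] at h1
    have hbx : b₂ ⬝ᵥ x = t := by rw [htdef, hxdef]
    rw [hbx] at h1
    nlinarith
  · intro ht
    refine posSemidef_iff_dotProduct_mulVec.mpr ⟨hA.isHermitian.sub (posSemidef_vecMulVec_self b₂).1, fun x => ?_⟩
    simp only [star_trivial]
    rw [sub_mulVec, dotProduct_sub, vecMulVec_mulVec', dotProduct_smul, smul_eq_mul]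
    have hq0 : 0 ≤ x ⬝ᵥ A *ᵥ x := by simpa using hA.posSemidef.dotProduct_mulVec_nonneg x
    -- square root of A
    open MatrixOrder in set S := CFC.sqrt A with hSdef
    open MatrixOrder in have hSS : S * S = A := CFC.sqrt_mul_sqrt_self A hA.posSemidef.nonneg
    open MatrixOrder in have hSherm : S.IsHermitian := (CFC.sqrt_nonneg A).posSemidef.1
    have hSu : IsUnit S.det := by
      have : S.det * S.det = A.det := by rw [← det_mul, hSS]
      rcases hAu with ⟨u, hu⟩
      refine IsUnit.of_mul_eq_one (S.det * (↑u⁻¹ : ℝ)) ?_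
      rw [← mul_assoc, this, ← hu]
      exact u.mul_inv
    have hS1 : S * S⁻¹ = 1 := mul_nonsing_inv S hSu
    have hS1' : S⁻¹ * S = 1 := nonsing_inv_mul S hSu
    have hSiherm : (S⁻¹).IsHermitian := hSherm.inv
    set u := S *ᵥ x with hudef
    set v := S⁻¹ *ᵥ b₂ with hvdef
    have claim1 : b₂ ⬝ᵥ x = v ⬝ᵥ u := by
      rw [hvdef, hudef, symm_dot_assoc hSherm, mulVec_mulVec, hS1, one_mulVec]
    have claim2 : x ⬝ᵥ A *ᵥ x = u ⬝ᵥ u := by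
      rw [← hSS, ← mulVec_mulVec, symm_dot_assoc hSherm, hudef]
    have claim3 : t = v ⬝ᵥ v := by
      rw [htdef, ← hSS, Matrix.mul_inv_rev, ← mulVec_mulVec,
        symm_dot_assoc hSiherm, hvdef]
    have hcs : (v ⬝ᵥ u) ^ 2 ≤ (v ⬝ᵥ v) * (u ⬝ᵥ u) := dot_sq_cauchy v u
    have hxb : x ⬝ᵥ b₂ = b₂ ⬝ᵥ x := dotProduct_comm _ _
    rw [hxb, claim1, claim2]
    have huu : 0 ≤ u ⬝ᵥ u := by rw [← claim2]; exact hq0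
    nlinarith [claim3 ▸ ht, claim3 ▸ ht0]
end

section
/- Let τ be a symmetric positive definite l×l matrix, σ ≠ 0 real, A ∈ ℝˡ, γ ∈ ℝˡ, d ∈ (0,1). If ((1+d)τA − (1−d)γ)'((3+d)(1−d)σ²τ + 4(τA)(τA)')⁻¹((1+d)τA − (1−d)γ) ≤ 1, then [σ²τ + (τA)(τA)'] − 2⁻²[(1+d)²σ²τ + ((1+d)τA − (1−d)γ)((1+d)τA − (1−d)γ)'] is positive semidefinite. -/
open Matrix

private lemma dot_vecMulVec {n : ℕ} (u v x y : Fin n → ℝ) :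
    x ⬝ᵥ (vecMulVec u v) *ᵥ y = (x ⬝ᵥ u) * (v ⬝ᵥ y) := by
  simp only [dotProduct, mulVec, vecMulVec_apply, Finset.mul_sum]
  rw [Finset.sum_comm]
  refine Finset.sum_congr rfl fun i _ => ?_
  rw [Finset.sum_mul]
  exact Finset.sum_congr rfl fun j _ => by ring

private lemma symm_dot {n : ℕ} {M : Matrix (Fin n) (Fin n) ℝ} (hM : Mᵀ = M)
    (u v : Fin n → ℝ) : u ⬝ᵥ M *ᵥ v = v ⬝ᵥ M *ᵥ u := by
  calc u ⬝ᵥ M *ᵥ v = (M *ᵥ v) ⬝ᵥ u := dotProduct_comm _ _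
    _ = (v ᵥ* Mᵀ) ⬝ᵥ u := by rw [vecMul_transpose]
    _ = (v ᵥ* M) ⬝ᵥ u := by rw [hM]
    _ = v ⬝ᵥ M *ᵥ u := (dotProduct_mulVec _ _ _).symm

private lemma herm_transpose {n : ℕ} {M : Matrix (Fin n) (Fin n) ℝ}
    (hM : M.IsHermitian) : Mᵀ = M := by
  ext i j
  have := congrFun (congrFun hM i) j
  simpa [conjTranspose_apply] using this

private lemma cs_psd {n : ℕ} {M : Matrix (Fin n) (Fin n) ℝ} (hM : M.PosSemidef)
    (u v : Fin n → ℝ) :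
    (u ⬝ᵥ M *ᵥ v) ^ 2 ≤ (u ⬝ᵥ M *ᵥ u) * (v ⬝ᵥ M *ᵥ v) := by
  have hMt : Mᵀ = M := herm_transpose hM.1
  have hsym : v ⬝ᵥ M *ᵥ u = u ⬝ᵥ M *ᵥ v := symm_dot hMt v u
  have key : ∀ t : ℝ, 0 ≤ (v ⬝ᵥ M *ᵥ v) * (t * t) + (2 * (u ⬝ᵥ M *ᵥ v)) * t + (u ⬝ᵥ M *ᵥ u) := by
    intro t
    have h0 := hM.dotProduct_mulVec_nonneg (u + t • v)
    simp only [star_trivial, mulVec_add, mulVec_smul, add_dotProduct, smul_dotProduct,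
      dotProduct_add, dotProduct_smul, smul_eq_mul] at h0
    rw [hsym] at h0
    nlinarith [h0]
  have hd := discrim_le_zero key
  rw [discrim] at hd
  nlinarith [hd]

theorem stmt_14 {l : ℕ} (τ : Matrix (Fin l) (Fin l) ℝ) (hτ : τ.PosDef)
    (σ : ℝ) (hσ : σ ≠ 0) (A γ : Fin l → ℝ) (d : ℝ) (hd : 0 < d) (hd1 : d < 1)
    (h : ((1 + d) • τ.mulVec A - (1 - d) • γ) ⬝ᵥ
        (((3 + d) * (1 - d) * σ ^ 2) • τ +
          (4 : ℝ) • vecMulVec (τ.mulVec A) (τ.mulVec A))⁻¹.mulVec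
          ((1 + d) • τ.mulVec A - (1 - d) • γ) ≤ 1) :
    ((σ ^ 2 • τ + vecMulVec (τ.mulVec A) (τ.mulVec A)) -
      ((2 : ℝ)⁻¹ ^ 2) •
        (((1 + d) ^ 2 * σ ^ 2) • τ +
          vecMulVec ((1 + d) • τ.mulVec A - (1 - d) • γ)
            ((1 + d) • τ.mulVec A - (1 - d) • γ))).PosSemidef := by
  set a : Fin l → ℝ := τ.mulVec A with ha
  set b : Fin l → ℝ := (1 + d) • a - (1 - d) • γ with hb
  set c : ℝ := (3 + d) * (1 - d) * σ ^ 2 with hc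
  have hcpos : 0 < c := by
    rw [hc]
    have h1 : 0 < σ ^ 2 := by positivity
    have h3 : (0:ℝ) < (3 + d) * (1 - d) := by nlinarith
    exact mul_pos h3 h1
  set D : Matrix (Fin l) (Fin l) ℝ := c • τ + (4 : ℝ) • vecMulVec a a with hD
  have hτt : τᵀ = τ := herm_transpose hτ.1
  have hτsym : ∀ i j, τ j i = τ i j := fun i j => by
    have := congrFun (congrFun hτt i) j; simpa using this
  have hDherm : D.IsHermitian := by
    ext i j
    simp [hD, conjTranspose_apply, vecMulVec_apply, hτsym i j, mul_comm]
  have hDform : ∀ x : Fin l → ℝ, x ⬝ᵥ D *ᵥ x = c * (x ⬝ᵥ τ *ᵥ x) + 4 * (x ⬝ᵥ a) ^ 2 := by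
    intro x
    simp only [hD, add_mulVec, smul_mulVec, dotProduct_add, dotProduct_smul,
      smul_eq_mul, dot_vecMulVec]
    have : a ⬝ᵥ x = x ⬝ᵥ a := dotProduct_comm _ _
    rw [this]; ring
  have hDpd : D.PosDef := by
    refine PosDef.of_dotProduct_mulVec_pos hDherm fun x hx => ?_
    have h1 : 0 < x ⬝ᵥ τ *ᵥ x := by simpa using hτ.dotProduct_mulVec_pos hx
    have h2 : 0 ≤ (x ⬝ᵥ a) ^ 2 := sq_nonneg _
    simp only [star_trivial]
    rw [hDform x]
    nlinarith
  have hDinv : D⁻¹.PosDef := hDpd.inv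
  have hDinv_psd : D⁻¹.PosSemidef := hDinv.posSemidef
  have hDunit : IsUnit D.det := isUnit_iff_ne_zero.mpr (ne_of_gt hDpd.det_pos)
  -- the target equals 4⁻¹ • (D - vecMulVec b b)
  have heq : ((σ ^ 2 • τ + vecMulVec a a) -
      ((2 : ℝ)⁻¹ ^ 2) • (((1 + d) ^ 2 * σ ^ 2) • τ + vecMulVec b b))
      = (4 : ℝ)⁻¹ • (D - vecMulVec b b) := by
    ext i j
    simp only [Matrix.sub_apply, Matrix.add_apply, Matrix.smul_apply, smul_eq_mul, vecMulVec_apply, hD, hc]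
    ring
  rw [heq]
  -- positive semidefiniteness of D - bb'
  have hN : (D - vecMulVec b b).PosSemidef := by
    refine PosSemidef.of_dotProduct_mulVec_nonneg ?_ ?_
    · ext i j
      have hd1' := congrFun (congrFun hDherm i) j
      simp only [conjTranspose_apply, star_trivial] at hd1' ⊢
      simp only [Matrix.sub_apply, vecMulVec_apply]
      rw [hd1']; ring
    · intro x
      simp only [star_trivial, sub_mulVec, dotProduct_sub, dot_vecMulVec]
      have hx : D⁻¹ *ᵥ (D *ᵥ x) = x := by
        rw [mulVec_mulVec, nonsing_inv_mul D hDunit, one_mulVec]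
      have hcs := cs_psd hDinv_psd b (D *ᵥ x)
      rw [hx, dotProduct_comm (D *ᵥ x) x] at hcs
      have hq : 0 ≤ x ⬝ᵥ D *ᵥ x := by simpa using hDpd.posSemidef.dotProduct_mulVec_nonneg x
      have hbx : x ⬝ᵥ b = b ⬝ᵥ x := dotProduct_comm _ _
      have h' : b ⬝ᵥ D⁻¹ *ᵥ b ≤ 1 := h
      rw [hbx]
      nlinarith [hcs, hq, h']
  -- scaling by nonneg
  refine PosSemidef.of_dotProduct_mulVec_nonneg ?_ ?_
  · ext i j
    have := congrFun (congrFun hN.1 i) j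
    simp only [conjTranspose_apply, star_trivial] at this ⊢
    simp only [Matrix.smul_apply, smul_eq_mul]
    rw [this]
  · intro x
    have := hN.dotProduct_mulVec_nonneg x
    simp only [star_trivial] at this ⊢
    rw [smul_mulVec, dotProduct_smul, smul_eq_mul]
    positivity
end

section
/- Let X be a real n×l matrix, δ ∈ ℝⁿ, and let Δ, E be symmetric l×l matrices and b₁, b₂ ∈ ℝˡ with Δ = MSEM difference satisfying Δ + (b₁−b₂)(b₁−b₂)' symmetric. Define A = X(Δ + (b₁−b₂)(b₁−b₂)')X' + δδ' and θ = δ + X(b₁−b₂). If A is positive semidefinite, θ lies in the column space of A, and θ'A⁻θ ≤ 1 for a generalized inverse A⁻ of A, then XΔX' − X(b₁−b₂)δ' − δ(b₁−b₂)'X' is positive semidefinite, i.e., A − θθ' ≥ 0 and XΔX' − X(b₁−b₂)δ' − δ(b₁−b₂)'X' = A − θθ'. -/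
open Matrix

theorem stmt_18 {n l : ℕ} (X : Matrix (Fin n) (Fin l) ℝ) (δ : Fin n → ℝ)
    (Δ : Matrix (Fin l) (Fin l) ℝ) (hΔ : Δ.IsHermitian)
    (b₁ b₂ : Fin l → ℝ)
    (A Ag : Matrix (Fin n) (Fin n) ℝ) (θ : Fin n → ℝ)
    (hA : A = X * (Δ + vecMulVec (b₁ - b₂) (b₁ - b₂)) * Xᵀ + vecMulVec δ δ)
    (hθ : θ = δ + X.mulVec (b₁ - b₂))
    (hApsd : A.PosSemidef)
    (hrange : ∃ x, A.mulVec x = θ)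
    (hAg : A * Ag * A = A)
    (hle : θ ⬝ᵥ Ag.mulVec θ ≤ 1) :
    X * Δ * Xᵀ - vecMulVec (X.mulVec (b₁ - b₂)) δ -
        vecMulVec δ (X.mulVec (b₁ - b₂)) =
      A - vecMulVec θ θ ∧
    (X * Δ * Xᵀ - vecMulVec (X.mulVec (b₁ - b₂)) δ -
        vecMulVec δ (X.mulVec (b₁ - b₂))).PosSemidef := by
  have hmul1 : ∀ (a b : Fin l → ℝ),
      X * vecMulVec a b = vecMulVec (X.mulVec a) b := by
    intro a b; ext i j
    simp only [mul_apply, vecMulVec_apply, mulVec, dotProduct, Finset.sum_mul]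
    apply Finset.sum_congr rfl; intro k _; ring
  have hmul2 : ∀ (a : Fin n → ℝ) (b : Fin l → ℝ),
      vecMulVec a b * Xᵀ = vecMulVec a (X.mulVec b) := by
    intro a b; ext i j
    simp only [mul_apply, vecMulVec_apply, mulVec, dotProduct, Finset.mul_sum,
      transpose_apply]
    apply Finset.sum_congr rfl; intro k _; ring
  have hvvadd : ∀ (u v : Fin n → ℝ), vecMulVec (u + v) (u + v) =
      vecMulVec u u + vecMulVec u v + vecMulVec v u + vecMulVec v v := by
    intro u v; ext i j
    simp [vecMulVec_apply]; ring
  have heq : X * Δ * Xᵀ - vecMulVec (X.mulVec (b₁ - b₂)) δ -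
        vecMulVec δ (X.mulVec (b₁ - b₂)) = A - vecMulVec θ θ := by
    subst hA hθ
    rw [Matrix.mul_add, Matrix.add_mul, hmul1, hmul2, hvvadd]
    abel
  refine ⟨heq, ?_⟩
  rw [heq]
  obtain ⟨x, hx⟩ := hrange
  have hAH : Aᵀ = A := hApsd.1
  have hxA : x ᵥ* A = θ := by
    conv_lhs => rw [← hAH]
    rw [vecMul_transpose, hx]
  have hxAx : x ⬝ᵥ A.mulVec x ≤ 1 := by
    have : x ⬝ᵥ A.mulVec x = θ ⬝ᵥ Ag.mulVec θ := by
      conv_lhs => rw [← hAg]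
      rw [← mulVec_mulVec, ← mulVec_mulVec, dotProduct_mulVec, hxA, hx]
    rw [this]; exact hle
  obtain ⟨B, hBB, hBH⟩ : ∃ B : Matrix (Fin n) (Fin n) ℝ, B * B = A ∧ Bᵀ = B := by
    open scoped MatrixOrder in
    exact ⟨CFC.sqrt A, CFC.sqrt_mul_sqrt_self A hApsd.nonneg, (CFC.sqrt_nonneg A).posSemidef.1⟩
  have hBv : ∀ u : Fin n → ℝ, u ᵥ* B = B.mulVec u := by
    intro u; conv_lhs => rw [← hBH]
    rw [vecMul_transpose]
  refine PosSemidef.of_dotProduct_mulVec_nonneg ?_ ?_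
  · -- Hermitian
    have : (vecMulVec θ θ).IsHermitian := by
      ext i j; simp [vecMulVec_apply, mul_comm]
    exact hApsd.1.sub this
  · intro v
    simp only [RCLike.re_to_real, star_trivial] at *
    have key : ∀ u : Fin n → ℝ, u ⬝ᵥ A.mulVec u = (B.mulVec u) ⬝ᵥ (B.mulVec u) := by
      intro u
      rw [← hBB, ← mulVec_mulVec, dotProduct_mulVec, hBv]
    have hvθ : v ⬝ᵥ θ = (B.mulVec v) ⬝ᵥ (B.mulVec x) := by
      rw [← hx, ← hBB, ← mulVec_mulVec, dotProduct_mulVec, hBv]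
    have hcs := Finset.sum_mul_sq_le_sq_mul_sq Finset.univ (B.mulVec v) (B.mulVec x)
    have h1 : (v ⬝ᵥ θ) ^ 2 ≤ (v ⬝ᵥ A.mulVec v) * (x ⬝ᵥ A.mulVec x) := by
      rw [hvθ, key v, key x]
      simpa [dotProduct, pow_two] using hcs
    have h2 : 0 ≤ v ⬝ᵥ A.mulVec v := by simpa using hApsd.dotProduct_mulVec_nonneg v
    have h3 : (v ⬝ᵥ θ) ^ 2 ≤ v ⬝ᵥ A.mulVec v := by
      calc (v ⬝ᵥ θ) ^ 2 ≤ (v ⬝ᵥ A.mulVec v) * (x ⬝ᵥ A.mulVec x) := h1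
        _ ≤ (v ⬝ᵥ A.mulVec v) * 1 := by
            apply mul_le_mul_of_nonneg_left hxAx h2
        _ = v ⬝ᵥ A.mulVec v := mul_one _
    have hvv : v ⬝ᵥ (vecMulVec θ θ).mulVec v = (v ⬝ᵥ θ) ^ 2 := by
      simp only [vecMulVec_apply, mulVec, dotProduct, Finset.mul_sum, pow_two,
        Finset.sum_mul]
      rw [Finset.sum_comm]
      apply Finset.sum_congr rfl; intro i _
      apply Finset.sum_congr rfl; intro j _; ring
    rw [sub_mulVec, dotProduct_sub, hvv]
    linarith
end
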